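/- Let k be a field and let M₁ ⊆ J ⊆ M₀ be k-modules (more generally graded R-modules for R = k[X,Y,Z,T]) with quotients M = J/M₁ and M₋₁ = M₀/J, with inclusion maps l : M₁ → J, i : J → M₀, projection p : M₀ → M₋₁, and j = i ∘ l. Let A be a discrete valuation ring which is a k-algebra with uniformizer a, residue field k and fraction field K. Consider the complex of A-modules M• = (M₁ ⊗_k A →^{j⊗a} M₀ ⊗_k A →^{p⊗a} M₋₁ ⊗_k A), where (f ⊗ a)(x ⊗ λ) = f(x) ⊗ aλ. Then (p⊗a)∘(j⊗a) = 0, and: h₀(M• ⊗_A K) ≅ M ⊗_k K, while h₀(M• ⊗_A k) ≅ M₀. -/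

import Mathlib

universe u

open LinearMap TensorProduct

section aux

variable {A : Type u} [CommRing A] (a : A)
variable {Q : Type u} [AddCommGroup Q] [Module A Q]

theorem aux_smul_tensor {X : Type u} [AddCommGroup X] [Module A X]
    (eQ : Q ≃ₗ[A] Q) (heQ : ∀ c : Q, eQ c = a • c) (z : X ⊗[A] Q) :
    (LinearEquiv.lTensor X eQ) z = a • z := by
  induction z using TensorProduct.induction_on with
  | zero => simp
  | tmul x c => simp [heQ, tmul_smul]
  | add x y hx hy => simp [hx, hy, smul_add]

theorem aux_ker_range (eQ : Q ≃ₗ[A] Q) (heQ : ∀ c : Q, eQ c = a • c)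
    {N P : Type u} [AddCommGroup N] [Module A N] [AddCommGroup P] [Module A P]
    (f : N →ₗ[A] P) :
    LinearMap.ker ((a • f).rTensor Q) = LinearMap.ker (f.rTensor Q) ∧
    LinearMap.range ((a • f).rTensor Q) = LinearMap.range (f.rTensor Q) := by
  constructor
  · ext z
    simp only [LinearMap.mem_ker, LinearMap.rTensor_smul, LinearMap.smul_apply]
    constructor
    · intro h
      apply (LinearEquiv.lTensor P eQ).injective
      rw [aux_smul_tensor a eQ heQ, map_zero, h]
    · intro h; rw [h, smul_zero]
  · ext z
    simp only [LinearMap.mem_range, LinearMap.rTensor_smul, LinearMap.smul_apply]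
    constructor
    · rintro ⟨y, rfl⟩
      exact ⟨a • y, (map_smul _ a y)⟩
    · rintro ⟨y, rfl⟩
      refine ⟨(LinearEquiv.lTensor N eQ).symm y, ?_⟩
      have hy : a • ((LinearEquiv.lTensor N eQ).symm y) = y := by
        rw [← aux_smul_tensor a eQ heQ, LinearEquiv.apply_symm_apply]
      rw [← map_smul, hy]

end aux

set_option maxHeartbeats 1000000 in
theorem stmt13 {k : Type u} [Field k]
    {M0 : Type u} [AddCommGroup M0] [Module k M0]
    (J M1 : Submodule k M0) (hJM : M1 ≤ J)
    {A : Type u} [CommRing A] [IsDomain A] [IsDiscreteValuationRing A] [Algebra k A]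
    (a : A) (ha : Irreducible a)
    (hres : Function.Bijective ((Ideal.Quotient.mk (Ideal.span {a})).comp (algebraMap k A))) :
    ((a • LinearMap.baseChange A J.mkQ).comp (a • LinearMap.baseChange A M1.subtype) = 0) ∧
    (∃ φ : LinearMap.ker ((a • LinearMap.baseChange A J.mkQ).rTensor (FractionRing A)) →ₗ[A]
        TensorProduct A (TensorProduct k A (J ⧸ M1.comap J.subtype)) (FractionRing A),
      Function.Surjective φ ∧
      LinearMap.ker φ =
        (LinearMap.range ((a • LinearMap.baseChange A M1.subtype).rTensor
            (FractionRing A))).comap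
          (LinearMap.ker ((a • LinearMap.baseChange A J.mkQ).rTensor
            (FractionRing A))).subtype) ∧
    (∃ ψ : LinearMap.ker ((a • LinearMap.baseChange A J.mkQ).rTensor (A ⧸ Ideal.span {a})) →ₗ[A]
        TensorProduct A (TensorProduct k A M0) (A ⧸ Ideal.span {a}),
      Function.Surjective ψ ∧
      LinearMap.ker ψ =
        (LinearMap.range ((a • LinearMap.baseChange A M1.subtype).rTensor
            (A ⧸ Ideal.span {a}))).comap
          (LinearMap.ker ((a • LinearMap.baseChange A J.mkQ).rTensor
            (A ⧸ Ideal.span {a}))).subtype) := by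
  classical
  have ha0 : a ≠ 0 := ha.ne_zero
  refine ⟨?_, ?_, ?_⟩
  · -- the complex condition
    have hc : J.mkQ.comp M1.subtype = 0 := by
      apply LinearMap.ext; intro x
      simpa using (Submodule.Quotient.mk_eq_zero J).2 (hJM x.2)
    rw [LinearMap.smul_comp, LinearMap.comp_smul, ← LinearMap.baseChange_comp, hc,
      LinearMap.baseChange_zero, smul_zero, smul_zero]
  · -- generic fiber
    set K := FractionRing A with hK
    have hmap0 : (algebraMap A K) a ≠ 0 := fun h =>
      ha0 (IsFractionRing.injective A K (by rw [h, map_zero]))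
    let eQ : K ≃ₗ[A] K :=
      { toFun := fun c => a • c
        map_add' := fun x y => smul_add a x y
        map_smul' := fun r x => smul_comm a r x
        invFun := fun c => (algebraMap A K a)⁻¹ * c
        left_inv := fun c => by
          show (algebraMap A K a)⁻¹ * (a • c) = c
          rw [Algebra.smul_def, ← mul_assoc, inv_mul_cancel₀ hmap0, one_mul]
        right_inv := fun c => by
          show a • ((algebraMap A K a)⁻¹ * c) = c
          rw [Algebra.smul_def, ← mul_assoc, mul_inv_cancel₀ hmap0, one_mul] }
    have heQ : ∀ c : K, eQ c = a • c := fun _ => rfl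
    -- k-level exact sequences
    set M1' : Submodule k J := M1.comap J.subtype with hM1'
    have E1 : Function.Exact (Submodule.inclusion hJM : M1 →ₗ[k] J) M1'.mkQ :=
      LinearMap.exact_iff.2 (by
        rw [Submodule.ker_mkQ, Submodule.range_inclusion])
    have E2 : Function.Exact J.subtype J.mkQ :=
      LinearMap.exact_iff.2 (by rw [Submodule.ker_mkQ, Submodule.range_subtype])
    -- A-level (flat base change)
    have E1A : Function.Exact ((Submodule.inclusion hJM : M1 →ₗ[k] J).baseChange A)
        (M1'.mkQ.baseChange A) := by
      rw [LinearMap.baseChange_eq_ltensor, LinearMap.baseChange_eq_ltensor]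
      exact Module.Flat.lTensor_exact A E1
    have E2A : Function.Exact (J.subtype.baseChange A) (J.mkQ.baseChange A) := by
      rw [LinearMap.baseChange_eq_ltensor, LinearMap.baseChange_eq_ltensor]
      exact Module.Flat.lTensor_exact A E2
    -- K-level
    set H' := ((Submodule.inclusion hJM : M1 →ₗ[k] J).baseChange A).rTensor K with hH'
    set Φ0 := (M1'.mkQ.baseChange A).rTensor K with hΦ0
    set ι := (J.subtype.baseChange A).rTensor K with hι
    set G := (J.mkQ.baseChange A).rTensor K with hG
    have E1K : Function.Exact H' Φ0 := Module.Flat.rTensor_exact K E1A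
    have E2K : Function.Exact ι G := Module.Flat.rTensor_exact K E2A
    have ιinj : Function.Injective ι := by
      apply Module.Flat.rTensor_preserves_injective_linearMap
      rw [LinearMap.baseChange_eq_ltensor]
      exact Module.Flat.lTensor_preserves_injective_linearMap _ J.injective_subtype
    have Φ0surj : Function.Surjective Φ0 := by
      apply LinearMap.rTensor_surjective
      rw [LinearMap.baseChange_eq_ltensor]
      exact LinearMap.lTensor_surjective A (Submodule.mkQ_surjective _)
    have hker2 := (aux_ker_range a eQ heQ (J.mkQ.baseChange A)).1
    have hrange1 := (aux_ker_range a eQ heQ (M1.subtype.baseChange A)).2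
    have hreq : LinearMap.range ι =
        LinearMap.ker ((a • LinearMap.baseChange A J.mkQ).rTensor K) := by
      rw [hker2]
      exact (LinearMap.exact_iff.1 E2K).symm
    let e : (A ⊗[k] J) ⊗[A] K ≃ₗ[A]
        LinearMap.ker ((a • LinearMap.baseChange A J.mkQ).rTensor K) :=
      (LinearEquiv.ofInjective ι ιinj).trans (LinearEquiv.ofEq _ _ hreq)
    have hcoe : ∀ z : (A ⊗[k] J) ⊗[A] K, ((e z : _) : (A ⊗[k] M0) ⊗[A] K) = ι z := by
      intro z
      show ((LinearEquiv.ofEq _ _ hreq) ((LinearEquiv.ofInjective ι ιinj) z) : (A ⊗[k] M0) ⊗[A] K) = ι z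
      rw [LinearEquiv.coe_ofEq_apply, LinearEquiv.ofInjective_apply]
    have hιsymm : ∀ w : LinearMap.ker ((a • LinearMap.baseChange A J.mkQ).rTensor K),
        ι (e.symm w) = (w : (A ⊗[k] M0) ⊗[A] K) := by
      intro w
      rw [← hcoe (e.symm w), e.apply_symm_apply]
    refine ⟨Φ0.comp (e.symm : _ ≃ₗ[A] _).toLinearMap, Φ0surj.comp e.symm.surjective, ?_⟩
    have hH : (M1.subtype.baseChange A).rTensor K = ι.comp H' := by
      have hsub : M1.subtype = J.subtype.comp (Submodule.inclusion hJM) :=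
        (Submodule.subtype_comp_inclusion _ _ hJM).symm
      rw [hsub, LinearMap.baseChange_comp, LinearMap.rTensor_comp]
    rw [hrange1, hH]
    ext w
    simp only [LinearMap.mem_ker, Submodule.mem_comap, Submodule.coe_subtype,
      LinearMap.mem_range, LinearMap.coe_comp, Function.comp_apply, LinearEquiv.coe_coe]
    constructor
    · intro h0
      have hmem : e.symm w ∈ LinearMap.range H' := by
        rw [← LinearMap.exact_iff.1 E1K]
        exact h0
      obtain ⟨y, hy⟩ := hmem
      exact ⟨y, by rw [hy, hιsymm w]⟩
    · rintro ⟨y, hy⟩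
      have heq : H' y = e.symm w := ιinj (by rw [hy, hιsymm w])
      rw [← heq]
      have : H' y ∈ LinearMap.ker Φ0 := by
        rw [LinearMap.exact_iff.1 E1K]
        exact ⟨y, rfl⟩
      exact this
  · -- special fiber
    have hz : ∀ {N P : Type u} [AddCommGroup N] [Module A N] [AddCommGroup P] [Module A P]
        (f : N →ₗ[A] P), (a • f).rTensor (A ⧸ Ideal.span {a}) = 0 := by
      intro N P _ _ _ _ f
      rw [LinearMap.rTensor_smul]
      apply TensorProduct.ext'
      intro x c
      have hac : a • c = 0 := by
        have h0 : (Ideal.Quotient.mk (Ideal.span {a})) a = 0 :=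
          Ideal.Quotient.eq_zero_iff_mem.2 (Ideal.mem_span_singleton_self a)
        rw [Algebra.smul_def, Ideal.Quotient.algebraMap_eq, h0, zero_mul]
      rw [LinearMap.smul_apply, LinearMap.rTensor_tmul, ← tmul_smul, hac, tmul_zero,
        LinearMap.zero_apply]
    refine ⟨(LinearMap.ker ((a • LinearMap.baseChange A J.mkQ).rTensor
        (A ⧸ Ideal.span {a}))).subtype, ?_, ?_⟩
    · intro x
      exact ⟨⟨x, by simp [LinearMap.mem_ker, hz]⟩, rfl⟩
    · rw [Submodule.ker_subtype, hz (LinearMap.baseChange A M1.subtype),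
        LinearMap.range_zero, Submodule.comap_bot, Submodule.ker_subtype]
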